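/- Let F : ℝ^d → ℝ be convex and twice continuously differentiable with Hessian L-Lipschitz in spectral norm, let r : ℝ^d → ℝ be convex, and let w* be a global minimizer of F + r. Fix an iterate w_t, let H_t = ∇²F(w_t) be symmetric positive definite, g_t = ∇F(w_t), and let ε ∈ (0, 1). Suppose a symmetric positive definite matrix H̃_t satisfies (1−ε)H_t ⪯ H̃_t ⪯ (1+ε)H_t, and define w_{t+1} as the global minimizer of z ↦ (1/2)‖z − (w_t − H̃_t⁻¹g_t)‖_{H̃_t}² + r(z). Then, writing Δ_t = w_t − w* and Δ_{t+1} = w_{t+1} − w*, one has ‖Δ_{t+1}‖_{H_t} ≤ (1/(1−ε))·( ε·‖Δ_t‖_{H_t} + (L/(2·√(σ_min(H_t))))·‖Δ_t‖₂² ). -/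

import Mathlib

open Matrix
open scoped RealInnerProductSpace

noncomputable section

/-- The `H`-weighted norm `‖x‖_H = √(xᵀHx)` of a vector in Euclidean space. -/
def normHE {d : ℕ} (H : Matrix (Fin d) (Fin d) ℝ) (x : EuclideanSpace ℝ (Fin d)) : ℝ :=
  Real.sqrt ⟪x, Matrix.toEuclideanLin H x⟫

/-- The smallest eigenvalue of a Hermitian matrix. -/
def sMin {d : ℕ} {H : Matrix (Fin d) (Fin d) ℝ} (hH : H.IsHermitian) : ℝ :=
  ⨅ i, hH.eigenvalues i

abbrev E (d : ℕ) := EuclideanSpace ℝ (Fin d)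

lemma inner_tel (M : Matrix (Fin d) (Fin d) ℝ) (x y : E d) :
    ⟪x, Matrix.toEuclideanLin M y⟫ = dotProduct (star (WithLp.equiv 2 _ x)) (M *ᵥ (WithLp.equiv 2 _ y)) := by
  exact dotProduct_comm _ _

lemma psd_nonneg {M : Matrix (Fin d) (Fin d) ℝ} (hM : M.PosSemidef) (x : E d) :
    0 ≤ ⟪x, Matrix.toEuclideanLin M x⟫ := by
  rw [inner_tel]
  simpa using hM.dotProduct_mulVec_nonneg (WithLp.equiv 2 _ x)

lemma herm_symm {M : Matrix (Fin d) (Fin d) ℝ} (hM : M.IsHermitian) (x y : E d) :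
    ⟪Matrix.toEuclideanLin M x, y⟫ = ⟪x, Matrix.toEuclideanLin M y⟫ :=
  (Matrix.isHermitian_iff_isSymmetric.1 hM) x y

lemma psd_cs {M : Matrix (Fin d) (Fin d) ℝ} (hM : M.PosSemidef) (x y : E d) :
    ⟪x, Matrix.toEuclideanLin M y⟫ ≤
      Real.sqrt ⟪x, Matrix.toEuclideanLin M x⟫ * Real.sqrt ⟪y, Matrix.toEuclideanLin M y⟫ := by
  set T := Matrix.toEuclideanLin M with hT
  have key : ∀ t : ℝ, 0 ≤ ⟪y, T y⟫ * (t * t) + (2 * ⟪x, T y⟫) * t + ⟪x, T x⟫ := by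
    intro t
    have h0 := psd_nonneg hM (x + t • y)
    have hsymm : ⟪y, T x⟫ = ⟪x, T y⟫ := by
      rw [← herm_symm hM.1, real_inner_comm]
    simp only [map_add, LinearMap.map_smul, inner_add_left, inner_add_right,
      real_inner_smul_left, real_inner_smul_right, ← hT] at h0
    rw [hsymm] at h0
    nlinarith [h0]
  have hd := discrim_le_zero key
  rw [discrim] at hd
  have h1 : ⟪x, T y⟫ ^ 2 ≤ ⟪x, T x⟫ * ⟪y, T y⟫ := by nlinarith
  calc ⟪x, T y⟫ ≤ |⟪x, T y⟫| := le_abs_self _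
    _ = Real.sqrt (⟪x, T y⟫ ^ 2) := (Real.sqrt_sq_eq_abs _).symm
    _ ≤ Real.sqrt (⟪x, T x⟫ * ⟪y, T y⟫) := Real.sqrt_le_sqrt h1
    _ = _ := Real.sqrt_mul (psd_nonneg hM x) _

lemma pd_inner_pos {H : Matrix (Fin d) (Fin d) ℝ} (hH : H.PosDef) {x : E d} (hx : x ≠ 0) :
    0 < ⟪x, Matrix.toEuclideanLin H x⟫ := by
  rw [inner_tel]
  have hx' : (WithLp.equiv 2 _ x) ≠ 0 := by
    intro h
    exact hx (by simpa using congrArg (WithLp.equiv 2 (Fin d → ℝ)).symm h)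
  simpa using hH.dotProduct_mulVec_pos hx'

lemma eps_bound {H M : Matrix (Fin d) (Fin d) ℝ} (hH : H.PosDef) (hM : M.IsHermitian)
    {ε : ℝ} (hε : 0 ≤ ε)
    (hbound : ∀ z : E d, |⟪z, Matrix.toEuclideanLin M z⟫| ≤ ε * ⟪z, Matrix.toEuclideanLin H z⟫)
    (x y : E d) :
    |⟪x, Matrix.toEuclideanLin M y⟫| ≤
      ε * Real.sqrt ⟪x, Matrix.toEuclideanLin H x⟫ * Real.sqrt ⟪y, Matrix.toEuclideanLin H y⟫ := by
  set TM := Matrix.toEuclideanLin M with hTM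
  set TH := Matrix.toEuclideanLin H with hTH
  have key : ∀ u v : E d, |⟪u, TM v⟫| ≤ (ε/2) * (⟪u, TH u⟫ + ⟪v, TH v⟫) := by
    intro u v
    have hs : ⟪v, TM u⟫ = ⟪u, TM v⟫ := by rw [← herm_symm hM, real_inner_comm]
    have e1 : ⟪u + v, TM (u + v)⟫ = ⟪u, TM u⟫ + 2 * ⟪u, TM v⟫ + ⟪v, TM v⟫ := by
      simp only [map_add, inner_add_left, inner_add_right]; linarith
    have e2 : ⟪u - v, TM (u - v)⟫ = ⟪u, TM u⟫ - 2 * ⟪u, TM v⟫ + ⟪v, TM v⟫ := by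
      simp only [map_sub, inner_sub_left, inner_sub_right]; linarith
    have b1 := hbound (u + v); have b2 := hbound (u - v)
    have e3 : ⟪u + v, TH (u + v)⟫ = ⟪u, TH u⟫ + 2 * ⟪u, TH v⟫ + ⟪v, TH v⟫ := by
      have hsH : ⟪v, TH u⟫ = ⟪u, TH v⟫ := by rw [← herm_symm hH.1, real_inner_comm]
      simp only [map_add, inner_add_left, inner_add_right]; linarith
    have e4 : ⟪u - v, TH (u - v)⟫ = ⟪u, TH u⟫ - 2 * ⟪u, TH v⟫ + ⟪v, TH v⟫ := by
      have hsH : ⟪v, TH u⟫ = ⟪u, TH v⟫ := by rw [← herm_symm hH.1, real_inner_comm]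
      simp only [map_sub, inner_sub_left, inner_sub_right]; linarith
    rw [abs_le] at b1 b2 ⊢
    constructor <;> nlinarith [b1.1, b1.2, b2.1, b2.2]
  rcases eq_or_ne x 0 with rfl | hx
  · simp only [inner_zero_left, abs_zero]
    positivity
  rcases eq_or_ne y 0 with rfl | hy
  · simp only [map_zero, inner_zero_right, abs_zero]
    positivity
  have ha : 0 < ⟪x, TH x⟫ := pd_inner_pos hH hx
  have hb : 0 < ⟪y, TH y⟫ := pd_inner_pos hH hy
  set a := ⟪x, TH x⟫; set b := ⟪y, TH y⟫
  have hsa := Real.sqrt_pos.2 ha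
  have hsb := Real.sqrt_pos.2 hb
  set s : ℝ := Real.sqrt (Real.sqrt b / Real.sqrt a) with hs
  have hspos : 0 < s := Real.sqrt_pos.2 (by positivity)
  have hinner : ⟪s • x, TM (s⁻¹ • y)⟫ = ⟪x, TM y⟫ := by
    rw [LinearMap.map_smul, real_inner_smul_left, real_inner_smul_right]
    field_simp
  have h1 := key (s • x) (s⁻¹ • y)
  rw [hinner] at h1
  have hq1 : ⟪s • x, TH (s • x)⟫ = s^2 * a := by
    rw [LinearMap.map_smul, real_inner_smul_left, real_inner_smul_right]; ring
  have hq2 : ⟪s⁻¹ • y, TH (s⁻¹ • y)⟫ = s⁻¹^2 * b := by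
    rw [LinearMap.map_smul, real_inner_smul_left, real_inner_smul_right]; ring
  rw [hq1, hq2] at h1
  have hs2 : s^2 = Real.sqrt b / Real.sqrt a := Real.sq_sqrt (by positivity)
  have hsab : Real.sqrt a ^ 2 = a := Real.sq_sqrt ha.le
  have hsbb : Real.sqrt b ^ 2 = b := Real.sq_sqrt hb.le
  have : s^2 * a + s⁻¹^2 * b = 2 * (Real.sqrt a * Real.sqrt b) := by
    rw [inv_pow, hs2]
    field_simp
    nlinarith [hsab, hsbb, hsa, hsb]
  rw [this] at h1
  linarith

lemma smin_psd {H : Matrix (Fin d) (Fin d) ℝ} (hH : H.IsHermitian) :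
    (H - (⨅ i, hH.eigenvalues i) • (1 : Matrix (Fin d) (Fin d) ℝ)).PosSemidef := by
  set c := ⨅ i, hH.eigenvalues i with hc
  have hle : ∀ i, c ≤ hH.eigenvalues i := fun i => ciInf_le (Finite.bddBelow_range _) i
  have hdiag : (Matrix.diagonal (fun i => hH.eigenvalues i - c)).PosSemidef :=
    Matrix.posSemidef_diagonal_iff.2 fun i => sub_nonneg.2 (hle i)
  have hU := hH.spectral_theorem
  set U := (hH.eigenvectorUnitary : Matrix (Fin d) (Fin d) ℝ) with hUdef
  have hUU : U * star U = 1 := (Matrix.mem_unitaryGroup_iff).mp hH.eigenvectorUnitary.2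
  have key : U * Matrix.diagonal (fun i => hH.eigenvalues i - c) * star U = H - c • 1 := by
    have hD : Matrix.diagonal (fun i => hH.eigenvalues i - c) =
        Matrix.diagonal (RCLike.ofReal ∘ hH.eigenvalues) - c • 1 := by
      ext i j
      by_cases hij : i = j <;>
        simp [Matrix.diagonal_apply, Matrix.smul_apply, Matrix.one_apply, hij, RCLike.ofReal]
    rw [hD, Matrix.mul_sub, Matrix.sub_mul,
      ← (show H = U * Matrix.diagonal (RCLike.ofReal ∘ hH.eigenvalues) * star U from hU), Matrix.mul_smul, Matrix.smul_mul, mul_one, hUU]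
  rw [← key, show star U = Uᴴ from rfl]
  exact hdiag.mul_mul_conjTranspose_same U

lemma toEuclideanLin_one : (Matrix.toEuclideanLin (1 : Matrix (Fin d) (Fin d) ℝ)) = LinearMap.id := by
  ext x
  simp [Matrix.toEuclideanLin_apply]

lemma smin_quad {H : Matrix (Fin d) (Fin d) ℝ} (hH : H.IsHermitian) (x : E d) :
    (⨅ i, hH.eigenvalues i) * ‖x‖^2 ≤ ⟪x, Matrix.toEuclideanLin H x⟫ := by
  have h := psd_nonneg (smin_psd hH) x
  rw [map_sub] at h
  simp only [LinearEquiv.map_smul, toEuclideanLin_one, LinearMap.sub_apply,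
    LinearMap.smul_apply, LinearMap.id_apply] at h
  rw [inner_sub_right, real_inner_smul_right, real_inner_self_eq_norm_sq] at h
  linarith

lemma grad_contDiff {F : E d → ℝ} (hF : ContDiff ℝ 2 F) : ContDiff ℝ 1 (gradient F) := by
  have h1 : ContDiff ℝ 1 (fderiv ℝ F) := hF.fderiv_right (by norm_num)
  have : gradient F = fun x => (InnerProductSpace.toDual ℝ (E d)).symm (fderiv ℝ F x) := rfl
  rw [this]
  exact (InnerProductSpace.toDual ℝ (E d)).symm.contDiff.comp h1

lemma ftc_grad {F : E d → ℝ} (hF : ContDiff ℝ 2 F)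
    (Hess : E d → Matrix (Fin d) (Fin d) ℝ)
    (hHess : ∀ w y, fderiv ℝ (gradient F) w y = Matrix.toEuclideanLin (Hess w) y)
    (L : ℝ)
    (hLip : ∀ w w' x, ‖Matrix.toEuclideanLin (Hess w - Hess w') x‖ ≤ L * ‖w - w'‖ * ‖x‖)
    (a Δ : E d) :
    gradient F (a + Δ) - gradient F a =
      ∫ s in (0:ℝ)..1, Matrix.toEuclideanLin (Hess (a + s • Δ)) Δ := by
  set f : ℝ → E d := fun s => Matrix.toEuclideanLin (Hess (a + s • Δ)) Δ with hf
  have hcont : Continuous f := by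
    have hlip : LipschitzWith (Real.toNNReal (L * ‖Δ‖^2)) f := by
      apply LipschitzWith.of_dist_le_mul
      intro s t
      rw [dist_eq_norm, dist_eq_norm, hf]
      have : Matrix.toEuclideanLin (Hess (a + s • Δ)) Δ -
          Matrix.toEuclideanLin (Hess (a + t • Δ)) Δ =
          Matrix.toEuclideanLin (Hess (a + s • Δ) - Hess (a + t • Δ)) Δ := by
        rw [map_sub]; rfl
      rw [this]
      calc ‖Matrix.toEuclideanLin (Hess (a + s • Δ) - Hess (a + t • Δ)) Δ‖
          ≤ L * ‖(a + s • Δ) - (a + t • Δ)‖ * ‖Δ‖ := hLip _ _ _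
        _ = (L * ‖Δ‖^2) * ‖s - t‖ := by
            rw [add_sub_add_left_eq_sub, ← sub_smul, norm_smul]
            simp [Real.norm_eq_abs]; ring
        _ ≤ (Real.toNNReal (L * ‖Δ‖^2) : ℝ) * ‖s - t‖ := by
            apply mul_le_mul_of_nonneg_right _ (norm_nonneg _)
            exact Real.le_coe_toNNReal _
    exact hlip.continuous
  have hgrad : ContDiff ℝ 1 (gradient F) := grad_contDiff hF
  have hderiv : ∀ s ∈ Set.uIcc (0:ℝ) 1,
      HasDerivAt (fun u => gradient F (a + u • Δ)) (f s) s := by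
    intro s _
    have hγ : HasDerivAt (fun u : ℝ => a + u • Δ) Δ s := by
      simpa using ((hasDerivAt_id s).smul_const Δ).const_add a
    have hg : HasFDerivAt (gradient F) (fderiv ℝ (gradient F) (a + s • Δ)) (a + s • Δ) :=
      (hgrad.differentiable one_ne_zero (a + s • Δ)).hasFDerivAt
    have := hg.comp_hasDerivAt s hγ
    rw [hHess] at this
    exact this
  have hint : IntervalIntegrable f MeasureTheory.volume 0 1 := hcont.intervalIntegrable _ _
  have := intervalIntegral.integral_eq_sub_of_hasDerivAt hderiv hint
  rw [this]
  simp

lemma int_bound {F : E d → ℝ} (hF : ContDiff ℝ 2 F)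
    (Hess : E d → Matrix (Fin d) (Fin d) ℝ)
    (hHess : ∀ w y, fderiv ℝ (gradient F) w y = Matrix.toEuclideanLin (Hess w) y)
    (L : ℝ)
    (hLip : ∀ w w' x, ‖Matrix.toEuclideanLin (Hess w - Hess w') x‖ ≤ L * ‖w - w'‖ * ‖x‖)
    (a Δ : E d) :
    ‖Matrix.toEuclideanLin (Hess (a + Δ)) Δ - (gradient F (a + Δ) - gradient F a)‖
      ≤ L / 2 * ‖Δ‖^2 := by
  rw [ftc_grad hF Hess hHess L hLip a Δ]
  set f : ℝ → E d := fun s => Matrix.toEuclideanLin (Hess (a + s • Δ)) Δ with hf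
  have hcont : Continuous f := by
    have hlip : LipschitzWith (Real.toNNReal (L * ‖Δ‖^2)) f := by
      apply LipschitzWith.of_dist_le_mul
      intro s t
      rw [dist_eq_norm, dist_eq_norm, hf]
      have : Matrix.toEuclideanLin (Hess (a + s • Δ)) Δ -
          Matrix.toEuclideanLin (Hess (a + t • Δ)) Δ =
          Matrix.toEuclideanLin (Hess (a + s • Δ) - Hess (a + t • Δ)) Δ := by
        rw [map_sub]; rfl
      rw [this]
      calc ‖Matrix.toEuclideanLin (Hess (a + s • Δ) - Hess (a + t • Δ)) Δ‖
          ≤ L * ‖(a + s • Δ) - (a + t • Δ)‖ * ‖Δ‖ := hLip _ _ _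
        _ = (L * ‖Δ‖^2) * ‖s - t‖ := by
            rw [add_sub_add_left_eq_sub, ← sub_smul, norm_smul]
            simp [Real.norm_eq_abs]; ring
        _ ≤ (Real.toNNReal (L * ‖Δ‖^2) : ℝ) * ‖s - t‖ := by
            apply mul_le_mul_of_nonneg_right _ (norm_nonneg _)
            exact Real.le_coe_toNNReal _
    exact hlip.continuous
  have hint : IntervalIntegrable f MeasureTheory.volume 0 1 := hcont.intervalIntegrable _ _
  have hintc : IntervalIntegrable (fun _ : ℝ => Matrix.toEuclideanLin (Hess (a + Δ)) Δ)
      MeasureTheory.volume 0 1 := intervalIntegrable_const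
  have hsplit : Matrix.toEuclideanLin (Hess (a + Δ)) Δ - ∫ s in (0:ℝ)..1, f s
      = ∫ s in (0:ℝ)..1, (Matrix.toEuclideanLin (Hess (a + Δ)) Δ - f s) := by
    rw [intervalIntegral.integral_sub hintc hint, intervalIntegral.integral_const]
    simp
  rw [hsplit]
  have hbound : ∀ s ∈ Set.Ioc (0:ℝ) 1,
      ‖Matrix.toEuclideanLin (Hess (a + Δ)) Δ - f s‖ ≤ L * ((1 - s) * ‖Δ‖^2) := by
    intro s hs
    have : Matrix.toEuclideanLin (Hess (a + Δ)) Δ - f s =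
        Matrix.toEuclideanLin (Hess (a + Δ) - Hess (a + s • Δ)) Δ := by
      rw [map_sub]; rfl
    rw [this]
    calc ‖Matrix.toEuclideanLin (Hess (a + Δ) - Hess (a + s • Δ)) Δ‖
        ≤ L * ‖(a + Δ) - (a + s • Δ)‖ * ‖Δ‖ := hLip _ _ _
      _ = L * ((1 - s) * ‖Δ‖^2) := by
          rw [add_sub_add_left_eq_sub]
          nth_rewrite 1 [← one_smul ℝ Δ]
          rw [← sub_smul, norm_smul]
          simp only [Real.norm_eq_abs, abs_of_nonneg (by linarith [hs.2] : (0:ℝ) ≤ 1 - s)]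
          ring
  have hL0 : 0 ≤ L * ‖Δ‖^2 := by
    have h := hLip (a + Δ) a Δ
    rw [add_sub_cancel_left] at h
    nlinarith [norm_nonneg (Matrix.toEuclideanLin (Hess (a + Δ) - Hess a) Δ)]
  have hval : ∫ s in (0:ℝ)..1, L * ((1 - s) * ‖Δ‖^2) = L / 2 * ‖Δ‖^2 := by
    rw [intervalIntegral.integral_const_mul, intervalIntegral.integral_mul_const,
      intervalIntegral.integral_sub intervalIntegrable_const
        (continuous_id'.intervalIntegrable 0 1)]
    simp [integral_id]
    ring
  calc ‖∫ s in (0:ℝ)..1, (Matrix.toEuclideanLin (Hess (a + Δ)) Δ - f s)‖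
      ≤ |∫ s in (0:ℝ)..1, L * ((1 - s) * ‖Δ‖^2)| := by
        apply intervalIntegral.norm_integral_le_abs_of_norm_le
        · filter_upwards [MeasureTheory.ae_restrict_mem measurableSet_Ioc] with s hs
          rw [Set.uIoc_of_le (by norm_num : (0:ℝ) ≤ 1)] at hs
          exact hbound s hs
        · exact (continuous_const.mul ((continuous_const.sub continuous_id').mul
            continuous_const)).intervalIntegrable 0 1
    _ = L / 2 * ‖Δ‖^2 := by
        rw [hval, abs_of_nonneg (by linarith)]

lemma small_t {A c B : ℝ} (hc : 0 ≤ c) (h : ∀ t : ℝ, t ∈ Set.Ioc (0:ℝ) 1 → 0 ≤ A + t * c + B) :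
    0 ≤ A + B := by
  by_contra hneg
  push_neg at hneg
  set δ := -(A + B) with hδ
  have hδpos : 0 < δ := by simp [hδ]; linarith
  have ht : (min 1 (δ / (2 * (c + 1)))) ∈ Set.Ioc (0:ℝ) 1 := by
    constructor
    · apply lt_min one_pos
      positivity
    · exact min_le_left _ _
  have := h _ ht
  have htc : (min 1 (δ / (2 * (c + 1)))) * c ≤ δ / 2 := by
    calc (min 1 (δ / (2 * (c + 1)))) * c ≤ (δ / (2 * (c + 1))) * c :=
          mul_le_mul_of_nonneg_right (min_le_right _ _) hc
      _ ≤ δ / 2 := by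
          rw [div_mul_eq_mul_div, div_le_div_iff₀ (by positivity) (by norm_num)]
          nlinarith
  linarith

lemma prox_opt {Ht : Matrix (Fin d) (Fin d) ℝ} (hHt : Ht.PosSemidef)
    {r : E d → ℝ} (hr : ConvexOn ℝ Set.univ r) {v w : E d}
    (hw : ∀ z : E d, (1/2) * ⟪w - v, Matrix.toEuclideanLin Ht (w - v)⟫ + r w ≤
      (1/2) * ⟪z - v, Matrix.toEuclideanLin Ht (z - v)⟫ + r z)
    (z : E d) : 0 ≤ ⟪Matrix.toEuclideanLin Ht (w - v), z - w⟫ + (r z - r w) := by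
  set T := Matrix.toEuclideanLin Ht with hT
  set u := z - w with hu
  have hc : 0 ≤ ⟪u, T u⟫ := psd_nonneg hHt u
  apply small_t (c := ⟪u, T u⟫ / 2) (by linarith)
  intro t ht
  have hcvx : r (w + t • u) ≤ (1 - t) * r w + t * r z := by
    have h2 := hr.2 (Set.mem_univ w) (Set.mem_univ z)
      (by linarith [ht.1, ht.2] : (0:ℝ) ≤ 1 - t) (le_of_lt ht.1) (by ring)
    have he : (1 - t) • w + t • z = w + t • u := by
      rw [hu, smul_sub, sub_smul, one_smul]; abel
    rwa [he] at h2
  have hq := hw (w + t • u)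
  have hsymm : ⟪w - v, T u⟫ = ⟪T (w - v), u⟫ := (herm_symm hHt.1 (w - v) u).symm
  have hsymm2 : ⟪u, T (w - v)⟫ = ⟪T (w - v), u⟫ := real_inner_comm _ _
  have hexp : ⟪w + t • u - v, T (w + t • u - v)⟫ =
      ⟪w - v, T (w - v)⟫ + 2 * t * ⟪T (w - v), u⟫ + t^2 * ⟪u, T u⟫ := by
    have hrw : w + t • u - v = (w - v) + t • u := by abel
    rw [hrw]
    simp only [map_add, LinearMap.map_smul, inner_add_left, inner_add_right,
      real_inner_smul_left, real_inner_smul_right]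
    rw [hsymm, hsymm2]
    ring
  have h3 : 0 ≤ t * (⟪T (w - v), u⟫ + t * (⟪u, T u⟫ / 2) + (r z - r w)) := by
    nlinarith [hq, hexp, hcvx]
  exact (mul_nonneg_iff_of_pos_left ht.1).mp h3

lemma star_opt {F : E d → ℝ} (hF : ContDiff ℝ 2 F) {r : E d → ℝ} (hr : ConvexOn ℝ Set.univ r)
    {wstar : E d} (hmin : ∀ w, F wstar + r wstar ≤ F w + r w) (z : E d) :
    0 ≤ ⟪gradient F wstar, z - wstar⟫ + (r z - r wstar) := by
  set u := z - wstar with hu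
  set φ : ℝ → ℝ := fun t => F (wstar + t • u) with hφdef
  have h0 : wstar + (0:ℝ) • u = wstar := by simp
  have hγ : HasDerivAt (fun t : ℝ => wstar + t • u) u 0 := by
    simpa using ((hasDerivAt_id (0:ℝ)).smul_const u).const_add wstar
  have hdF : HasFDerivAt F (fderiv ℝ F wstar) (wstar + (0:ℝ) • u) := by
    rw [h0]
    exact (hF.differentiable (by norm_num) wstar).hasFDerivAt
  have hφ : HasDerivAt φ (⟪gradient F wstar, u⟫) 0 := by
    have := hdF.comp_hasDerivAt 0 hγ
    have hg : fderiv ℝ F wstar u = ⟪gradient F wstar, u⟫ := by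
      rw [gradient, InnerProductSpace.toDual_symm_apply]
    rwa [hg] at this
  have hslope := hasDerivAt_iff_tendsto_slope.1 hφ
  have hslope2 : Filter.Tendsto (slope φ 0) (nhdsWithin 0 (Set.Ioi 0))
      (nhds (⟪gradient F wstar, u⟫)) :=
    hslope.mono_left (nhdsWithin_mono 0 (fun x hx => ne_of_gt hx))
  have hev : ∀ᶠ t in nhdsWithin (0:ℝ) (Set.Ioi 0), -(r z - r wstar) ≤ slope φ 0 t := by
    apply Filter.eventually_of_mem (Ioc_mem_nhdsGT_of_mem ⟨le_refl (0:ℝ), zero_lt_one⟩)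
    intro t ht
    have hcvx : r (wstar + t • u) ≤ (1 - t) * r wstar + t * r z := by
      have h2 := hr.2 (Set.mem_univ wstar) (Set.mem_univ z)
        (by linarith [ht.1, ht.2] : (0:ℝ) ≤ 1 - t) (le_of_lt ht.1) (by ring)
      have he : (1 - t) • wstar + t • z = wstar + t • u := by
        rw [hu, smul_sub, sub_smul, one_smul]; abel
      rwa [he] at h2
    have hm := hmin (wstar + t • u)
    have hnum : -(r z - r wstar) * t ≤ φ t - φ 0 := by
      simp only [hφdef, h0]
      nlinarith [hcvx, hm]
    rw [slope_def_field, sub_zero, le_div_iff₀ ht.1]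
    exact hnum
  have := ge_of_tendsto hslope2 hev
  linarith

lemma toEL_mul (A B : Matrix (Fin d) (Fin d) ℝ) (x : E d) :
    Matrix.toEuclideanLin (A * B) x = Matrix.toEuclideanLin A (Matrix.toEuclideanLin B x) := by
  simp [Matrix.toEuclideanLin_apply, ← Matrix.mulVec_mulVec]

set_option maxHeartbeats 2000000 in
/-- error recursion for one step of sub-sampled proximal Newton,
`w_{t+1} = prox_r^{H̃_t}(w_t − H̃_t⁻¹∇F(w_t))`. -/
theorem sspn_error_recursion {d : ℕ}
    (F : EuclideanSpace ℝ (Fin d) → ℝ)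
    (hFconv : ConvexOn ℝ Set.univ F) (hF : ContDiff ℝ 2 F)
    (L : ℝ)
    (Hess : EuclideanSpace ℝ (Fin d) → Matrix (Fin d) (Fin d) ℝ)
    (hHess : ∀ w y, fderiv ℝ (gradient F) w y = Matrix.toEuclideanLin (Hess w) y)
    (hLip : ∀ w w' x, ‖Matrix.toEuclideanLin (Hess w - Hess w') x‖ ≤ L * ‖w - w'‖ * ‖x‖)
    (r : EuclideanSpace ℝ (Fin d) → ℝ) (hr : ConvexOn ℝ Set.univ r)
    (wstar : EuclideanSpace ℝ (Fin d)) (hmin : ∀ w, F wstar + r wstar ≤ F w + r w)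
    (wt : EuclideanSpace ℝ (Fin d)) (hHt : (Hess wt).PosDef)
    (ε : ℝ) (hε : 0 < ε ∧ ε < 1)
    (Htil : Matrix (Fin d) (Fin d) ℝ) (hHtil : Htil.PosDef)
    (happrox : (Htil - (1 - ε) • Hess wt).PosSemidef ∧ ((1 + ε) • Hess wt - Htil).PosSemidef)
    (wnext : EuclideanSpace ℝ (Fin d))
    (hwnext : ∀ z,
      (1 / 2) * normHE Htil (wnext -
          (wt - Matrix.toEuclideanLin Htil⁻¹ (gradient F wt))) ^ 2 + r wnext ≤
        (1 / 2) * normHE Htil (z -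
          (wt - Matrix.toEuclideanLin Htil⁻¹ (gradient F wt))) ^ 2 + r z) :
    normHE (Hess wt) (wnext - wstar) ≤
      (1 / (1 - ε)) * (ε * normHE (Hess wt) (wt - wstar)
        + (L / (2 * Real.sqrt (sMin hHt.1))) * ‖wt - wstar‖ ^ 2) := by
  obtain ⟨hε0, hε1⟩ := hε
  have h1ε : (0:ℝ) < 1 - ε := by linarith
  obtain ⟨Δ, hΔ⟩ : ∃ x : E d, wt - wstar = x := ⟨_, rfl⟩
  obtain ⟨Δ', hΔ'⟩ : ∃ x : E d, wnext - wstar = x := ⟨_, rfl⟩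
  rw [hΔ, hΔ']
  have hq0 : (0:ℝ) ≤ ⟪Δ', Matrix.toEuclideanLin (Hess wt) Δ'⟫ := psd_nonneg hHt.posSemidef Δ'
  have hq0' : (0:ℝ) ≤ ⟪Δ, Matrix.toEuclideanLin (Hess wt) Δ⟫ := psd_nonneg hHt.posSemidef Δ
  have hL0 : 0 ≤ L * ‖Δ‖^2 := by
    have h := hLip wt wstar Δ
    rw [hΔ] at h
    nlinarith [norm_nonneg (Matrix.toEuclideanLin (Hess wt - Hess wstar) Δ)]
  rcases Nat.eq_zero_or_pos d with hd | hd
  · subst hd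
    have hz : Δ' = 0 := by ext i; exact i.elim0
    have hz2 : Δ = 0 := by ext i; exact i.elim0
    rw [hz, hz2]
    simp [normHE]
  haveI : Nonempty (Fin d) := ⟨⟨0, hd⟩⟩
  have hσpos : 0 < sMin hHt.1 := by
    obtain ⟨i₀, hi₀⟩ := Finite.exists_min (fun i => hHt.1.eigenvalues i)
    have h1 : hHt.1.eigenvalues i₀ ≤ sMin hHt.1 := le_ciInf hi₀
    exact lt_of_lt_of_le (hHt.eigenvalues_pos i₀) h1
  have hsq : (0:ℝ) < Real.sqrt (sMin hHt.1) := Real.sqrt_pos.2 hσpos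
  -- quadratic form comparisons
  have hlow : (1-ε) * ⟪Δ', Matrix.toEuclideanLin (Hess wt) Δ'⟫ ≤
      ⟪Δ', Matrix.toEuclideanLin Htil Δ'⟫ := by
    have h1 := psd_nonneg happrox.1 Δ'
    rw [map_sub, LinearEquiv.map_smul, LinearMap.sub_apply, LinearMap.smul_apply,
      inner_sub_right, real_inner_smul_right] at h1
    linarith
  have habs : ∀ z : E d, |⟪z, Matrix.toEuclideanLin (Htil - Hess wt) z⟫| ≤
      ε * ⟪z, Matrix.toEuclideanLin (Hess wt) z⟫ := by
    intro z
    have h1 := psd_nonneg happrox.1 z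
    have h2 := psd_nonneg happrox.2 z
    rw [map_sub, LinearEquiv.map_smul, LinearMap.sub_apply, LinearMap.smul_apply,
      inner_sub_right, real_inner_smul_right] at h1
    rw [map_sub, LinearEquiv.map_smul, LinearMap.sub_apply, LinearMap.smul_apply,
      inner_sub_right, real_inner_smul_right] at h2
    rw [map_sub, LinearMap.sub_apply, inner_sub_right, abs_le]
    constructor <;> linarith
  -- epsilon bound
  have hMherm : (Htil - Hess wt).IsHermitian := hHtil.1.sub hHt.1
  have heps : ⟪Δ', Matrix.toEuclideanLin (Htil - Hess wt) Δ⟫ ≤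
      ε * normHE (Hess wt) Δ' * normHE (Hess wt) Δ :=
    (le_abs_self _).trans (eps_bound hHt hMherm hε0.le habs Δ' Δ)
  -- optimality of wnext
  set g : E d := gradient F wt with hg
  set gs : E d := gradient F wstar with hgs
  have hw' : ∀ z : E d,
      (1/2) * ⟪wnext - (wt - Matrix.toEuclideanLin Htil⁻¹ g),
        Matrix.toEuclideanLin Htil (wnext - (wt - Matrix.toEuclideanLin Htil⁻¹ g))⟫ + r wnext ≤
      (1/2) * ⟪z - (wt - Matrix.toEuclideanLin Htil⁻¹ g),
        Matrix.toEuclideanLin Htil (z - (wt - Matrix.toEuclideanLin Htil⁻¹ g))⟫ + r z := by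
    intro z
    have h := hwnext z
    have e1 : normHE Htil (wnext - (wt - Matrix.toEuclideanLin Htil⁻¹ g)) ^ 2 =
        ⟪wnext - (wt - Matrix.toEuclideanLin Htil⁻¹ g),
          Matrix.toEuclideanLin Htil (wnext - (wt - Matrix.toEuclideanLin Htil⁻¹ g))⟫ :=
      Real.sq_sqrt (psd_nonneg hHtil.posSemidef _)
    have e2 : normHE Htil (z - (wt - Matrix.toEuclideanLin Htil⁻¹ g)) ^ 2 =
        ⟪z - (wt - Matrix.toEuclideanLin Htil⁻¹ g),
          Matrix.toEuclideanLin Htil (z - (wt - Matrix.toEuclideanLin Htil⁻¹ g))⟫ :=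
      Real.sq_sqrt (psd_nonneg hHtil.posSemidef _)
    rw [← e1, ← e2]
    exact h
  have P1 := prox_opt hHtil.posSemidef hr hw' wstar
  have P2 := star_opt hF hr hmin wnext
  have hTnv : Matrix.toEuclideanLin Htil (wnext - (wt - Matrix.toEuclideanLin Htil⁻¹ g)) =
      Matrix.toEuclideanLin Htil (wnext - wt) + g := by
    have hstep : wnext - (wt - Matrix.toEuclideanLin Htil⁻¹ g) =
        (wnext - wt) + Matrix.toEuclideanLin Htil⁻¹ g := by abel
    rw [hstep, map_add]
    congr 1
    rw [← toEL_mul, Matrix.mul_nonsing_inv _ (isUnit_iff_ne_zero.mpr hHtil.det_pos.ne'),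
      toEuclideanLin_one, LinearMap.id_apply]
  -- monotonicity inequality
  have hA : ⟪Δ', Matrix.toEuclideanLin Htil Δ'⟫ ≤
      ⟪Δ', Matrix.toEuclideanLin Htil Δ⟫ + (⟪gs, Δ'⟫ - ⟪g, Δ'⟫) := by
    have e1 : wnext - wt = Δ' - Δ := by rw [← hΔ, ← hΔ']; abel
    have e2 : wstar - wnext = -Δ' := by rw [← hΔ']; abel
    rw [hTnv, e1, e2] at P1
    rw [hΔ'] at P2
    rw [map_sub, inner_add_left, inner_sub_left, inner_neg_right, inner_neg_right,
      inner_neg_right] at P1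
    have c1 : ⟪Matrix.toEuclideanLin Htil Δ', Δ'⟫ = ⟪Δ', Matrix.toEuclideanLin Htil Δ'⟫ :=
      real_inner_comm _ _
    have c2 : ⟪Matrix.toEuclideanLin Htil Δ, Δ'⟫ = ⟪Δ', Matrix.toEuclideanLin Htil Δ⟫ :=
      real_inner_comm _ _
    linarith
  -- FTC bound
  have ha : wstar + Δ = wt := by rw [← hΔ]; abel
  have hEb := int_bound hF Hess hHess L hLip wstar Δ
  rw [ha] at hEb
  -- hEb : ‖T H Δ - (g - gs)‖ ≤ L / 2 * ‖Δ‖ ^ 2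
  have hB1 : ⟪Matrix.toEuclideanLin (Hess wt) Δ - (g - gs), Δ'⟫ ≤
      (L / 2 * ‖Δ‖^2) * (normHE (Hess wt) Δ' / Real.sqrt (sMin hHt.1)) := by
    have hL2 : 0 ≤ L / 2 * ‖Δ‖^2 := by linarith
    have hnormbd : ‖Δ'‖ ≤ normHE (Hess wt) Δ' / Real.sqrt (sMin hHt.1) := by
      rw [le_div_iff₀ hsq, mul_comm]
      have h1 : Real.sqrt (sMin hHt.1) * ‖Δ'‖ =
          Real.sqrt (sMin hHt.1 * ‖Δ'‖^2) := by
        rw [Real.sqrt_mul hσpos.le, Real.sqrt_sq (norm_nonneg _)]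
      rw [h1]
      exact Real.sqrt_le_sqrt (smin_quad hHt.1 Δ')
    calc ⟪Matrix.toEuclideanLin (Hess wt) Δ - (g - gs), Δ'⟫
        ≤ ‖Matrix.toEuclideanLin (Hess wt) Δ - (g - gs)‖ * ‖Δ'‖ := real_inner_le_norm _ _
      _ ≤ (L / 2 * ‖Δ‖^2) * ‖Δ'‖ := mul_le_mul_of_nonneg_right hEb (norm_nonneg _)
      _ ≤ (L / 2 * ‖Δ‖^2) * (normHE (Hess wt) Δ' / Real.sqrt (sMin hHt.1)) :=
          mul_le_mul_of_nonneg_left hnormbd hL2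
  -- identity
  have c3 : ⟪Matrix.toEuclideanLin (Hess wt) Δ, Δ'⟫ =
      ⟪Δ', Matrix.toEuclideanLin (Hess wt) Δ⟫ := real_inner_comm _ _
  have hiden : ⟪Δ', Matrix.toEuclideanLin Htil Δ⟫ + (⟪gs, Δ'⟫ - ⟪g, Δ'⟫) =
      ⟪Δ', Matrix.toEuclideanLin (Htil - Hess wt) Δ⟫ +
        ⟪Matrix.toEuclideanLin (Hess wt) Δ - (g - gs), Δ'⟫ := by
    rw [map_sub, LinearMap.sub_apply, inner_sub_right, inner_sub_left, inner_sub_left, c3]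
    ring
  -- key inequality
  have hn2 : (normHE (Hess wt) Δ')^2 = ⟪Δ', Matrix.toEuclideanLin (Hess wt) Δ'⟫ :=
    Real.sq_sqrt hq0
  have hkey : (1-ε) * (normHE (Hess wt) Δ')^2 ≤
      ε * normHE (Hess wt) Δ' * normHE (Hess wt) Δ +
        (L / 2 * ‖Δ‖^2) * (normHE (Hess wt) Δ' / Real.sqrt (sMin hHt.1)) := by
    rw [hn2]
    linarith
  -- conclude
  have hn'0 : 0 ≤ normHE (Hess wt) Δ' := Real.sqrt_nonneg _
  have hn0 : 0 ≤ normHE (Hess wt) Δ := Real.sqrt_nonneg _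
  have hterm : 0 ≤ (L / (2 * Real.sqrt (sMin hHt.1))) * ‖Δ‖^2 := by
    rw [div_mul_eq_mul_div]
    exact div_nonneg hL0 (by positivity)
  rcases eq_or_lt_of_le hn'0 with h0 | hpos
  · rw [← h0]
    apply mul_nonneg (by positivity)
    have h2 : 0 ≤ ε * normHE (Hess wt) Δ := by positivity
    linarith
  · rw [one_div, inv_mul_eq_div, le_div_iff₀ h1ε]
    have hrhs_eq : ε * normHE (Hess wt) Δ' * normHE (Hess wt) Δ +
        (L / 2 * ‖Δ‖^2) * (normHE (Hess wt) Δ' / Real.sqrt (sMin hHt.1)) =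
        (ε * normHE (Hess wt) Δ + (L / (2 * Real.sqrt (sMin hHt.1))) * ‖Δ‖^2) *
          normHE (Hess wt) Δ' := by
      field_simp
    rw [hrhs_eq] at hkey
    have hsq2 : (1-ε) * (normHE (Hess wt) Δ')^2 =
        ((1-ε) * normHE (Hess wt) Δ') * normHE (Hess wt) Δ' := by ring
    rw [hsq2] at hkey
    have h5 := le_of_mul_le_mul_right hkey hpos
    linarith
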